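/- Under setup (S), the case v < 0 is impossible; that is, necessarily v ≥ 0. -/

import Mathlib

open Polynomial Filter Set MeasureTheory

/-- Sum of the coefficients `p i` of `P` over indices `0 ≤ i ≤ y`. -/
noncomputable def cdfSum (P : Polynomial ℝ) (y : ℝ) : ℝ :=
  ∑ i ∈ P.support, if (i : ℝ) ≤ y then P.coeff i else 0

/-- The standard normal cumulative distribution function. -/
noncomputable def stdNormalCDF (x : ℝ) : ℝ :=
  (Real.sqrt (2 * Real.pi))⁻¹ * ∫ u in Set.Iic x, Real.exp (-u ^ 2 / 2)

open scoped Topology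

lemma aux_eval_pos (p : Polynomial ℝ) (hc : ∀ i, 0 ≤ p.coeff i) (hp : 0 < p.eval 1)
    {x : ℝ} (hx : 0 < x) : 0 < p.eval x := by
  rw [eval_eq_sum_range] at hp ⊢
  obtain ⟨i, hi, hipos⟩ : ∃ i ∈ Finset.range (p.natDegree + 1), (0:ℝ) < p.coeff i * 1 ^ i := by
    by_contra h
    push_neg at h
    exact absurd (Finset.sum_nonpos h) (not_le.2 hp)
  have hipos' : 0 < p.coeff i := by simpa using hipos
  refine lt_of_lt_of_le (mul_pos hipos' (pow_pos hx i)) ?_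
  exact Finset.single_le_sum (fun j _ => mul_nonneg (hc j) (le_of_lt (pow_pos hx j))) hi

lemma aux_cs (p : Polynomial ℝ) (hc : ∀ i, 0 ≤ p.coeff i) {u w : ℝ} (hu : 0 ≤ u) (hw : 0 ≤ w) :
    p.eval (Real.sqrt (u * w)) ^ 2 ≤ p.eval u * p.eval w := by
  rw [eval_eq_sum_range, eval_eq_sum_range, eval_eq_sum_range]
  refine Finset.sum_sq_le_sum_mul_sum_of_sq_eq_mul _
    (fun i _ => mul_nonneg (hc i) (pow_nonneg hu i))
    (fun i _ => mul_nonneg (hc i) (pow_nonneg hw i))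
    (fun i _ => ?_)
  have h : Real.sqrt (u * w) ^ 2 = u * w := Real.sq_sqrt (mul_nonneg hu hw)
  calc (p.coeff i * Real.sqrt (u * w) ^ i) ^ 2
      = p.coeff i ^ 2 * (Real.sqrt (u * w) ^ 2) ^ i := by ring
    _ = p.coeff i * u ^ i * (p.coeff i * w ^ i) := by rw [h, mul_pow]; ring


theorem embedding_clt_v_nonneg
    (k : ℕ) (hk : 1 ≤ k)
    (P : ℕ → Polynomial ℝ) (b : ℕ → Polynomial ℝ)
    (hPcoeff : ∀ n i, ∃ m : ℕ, (P n).coeff i = (m : ℝ))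
    (hPpos : ∀ n, 1 ≤ n → 0 < (P n).eval 1)
    (hbint : ∀ j i, ∃ m : ℤ, (b j).coeff i = (m : ℝ))
    (hrec : ∀ n, k < n → ∀ x : ℝ,
      (P n).eval x = ∑ j ∈ Finset.range k, (b (j + 1)).eval x * (P (n - (j + 1))).eval x)
    (F : ℝ → ℝ → ℝ)
    (hF : ∀ x l : ℝ,
      F x l = l ^ k - ∑ j ∈ Finset.range k, (b (j + 1)).eval x * l ^ (k - (j + 1)))
    (δ : ℝ) (hδ : 0 < δ) (lam : ℝ → ℝ)
    (hlamC2 : ContDiffOn ℝ 2 lam (Set.Ioo (1 - δ) (1 + δ)))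
    (hlamroot : ∀ x ∈ Set.Ioo (1 - δ) (1 + δ), F x (lam x) = 0)
    (D : ℝ) (hD : D = lam 1) (hDpos : 0 < D)
    (Q : Polynomial ℂ)
    (hQ : Q = X ^ k -
      ∑ j ∈ Finset.range k, Polynomial.C (((b (j + 1)).eval 1 : ℝ) : ℂ) * X ^ (k - (j + 1)))
    (hmult : Q.rootMultiplicity (D : ℂ) = 1)
    (hdom : ∀ μ : ℂ, Q.eval μ = 0 → μ ≠ (D : ℂ) → ‖μ‖ < D)
    (a : ℝ → ℝ)
    (hunif : TendstoUniformlyOn (fun n x => (P n).eval x / lam x ^ n) a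
      Filter.atTop (Set.Ioo (1 - δ) (1 + δ)))
    (ha1 : ContinuousAt a 1) (hapos : 0 < a 1)
    (e v : ℝ) (he : e = deriv lam 1 / D)
    (hv : v = (-(deriv lam 1) ^ 2 + D * deriv (deriv lam) 1 + D * deriv lam 1) / D ^ 2)
    : 0 ≤ v := by
  by_contra hvneg
  rw [not_le] at hvneg
  have hIoo_open : IsOpen (Set.Ioo (1 - δ) (1 + δ)) := isOpen_Ioo
  have h1mem : (1:ℝ) ∈ Set.Ioo (1 - δ) (1 + δ) := ⟨by linarith, by linarith⟩
  have hnhds : Set.Ioo (1 - δ) (1 + δ) ∈ 𝓝 (1:ℝ) := hIoo_open.mem_nhds h1mem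
  have hcoeff_nn : ∀ n i, 0 ≤ (P n).coeff i := by
    intro n i
    obtain ⟨m, hm⟩ := hPcoeff n i
    rw [hm]; positivity
  have hlam_cont : ContinuousAt lam 1 := hlamC2.continuousOn.continuousAt hnhds
  -- find ε
  have hev : ∀ᶠ x in 𝓝 (1:ℝ),
      0 < a x ∧ 0 < lam x ∧ x ∈ Set.Ioo (1 - δ) (1 + δ) ∧ 0 < x := by
    filter_upwards [ha1.eventually (eventually_gt_nhds hapos),
      hlam_cont.eventually (eventually_gt_nhds (hD ▸ hDpos)),
      hnhds, eventually_gt_nhds one_pos] with x h1 h2 h3 h4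
    exact ⟨h1, h2, h3, h4⟩
  obtain ⟨ε0, hε0pos, hball⟩ := Metric.eventually_nhds_iff.1 hev
  set ε : ℝ := min ε0 (1/2) with hεdef
  have hεpos : 0 < ε := lt_min hε0pos (by norm_num)
  have hεhalf : ε ≤ 1/2 := min_le_right _ _
  have hgood : ∀ x ∈ Set.Ioo (1 - ε) (1 + ε),
      0 < a x ∧ 0 < lam x ∧ x ∈ Set.Ioo (1 - δ) (1 + δ) ∧ 0 < x := by
    intro x hx
    apply hball
    rw [Real.dist_eq]
    rw [abs_lt]
    constructor
    · have := hx.1; have : x - 1 > -ε := by linarith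
      have hεε0 : ε ≤ ε0 := min_le_left _ _
      linarith
    · have := hx.2; have hεε0 : ε ≤ ε0 := min_le_left _ _
      linarith
  have h1ε : (0:ℝ) < 1 - ε := by linarith
  -- the interval J
  set J : Set ℝ := Set.Ioo (Real.log (1 - ε)) (Real.log (1 + ε)) with hJdef
  have hJopen : IsOpen J := isOpen_Ioo
  have hJmaps : ∀ t ∈ J, Real.exp t ∈ Set.Ioo (1 - ε) (1 + ε) := by
    intro t ht
    constructor
    · calc 1 - ε = Real.exp (Real.log (1 - ε)) := (Real.exp_log h1ε).symm
        _ < Real.exp t := Real.exp_lt_exp.2 ht.1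
    · calc Real.exp t < Real.exp (Real.log (1 + ε)) := Real.exp_lt_exp.2 ht.2
        _ = 1 + ε := Real.exp_log (by linarith)
  have h0J : (0:ℝ) ∈ J := by
    constructor
    · exact Real.log_neg h1ε (by linarith)
    · exact Real.log_pos (by linarith)
  set ψ : ℝ → ℝ := fun t => Real.log (lam (Real.exp t)) with hψdef
  -- limit lemma
  have hlimit : ∀ x ∈ Set.Ioo (1 - ε) (1 + ε),
      Tendsto (fun n : ℕ => Real.log ((P n).eval x) / n) atTop (𝓝 (Real.log (lam x))) := by
    intro x hx
    obtain ⟨hax, hlx, hxδ, hxpos⟩ := hgood x hx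
    have h1 : Tendsto (fun n => (P n).eval x / lam x ^ n) atTop (𝓝 (a x)) :=
      hunif.tendsto_at hxδ
    have h2 : Tendsto (fun n => Real.log ((P n).eval x / lam x ^ n)) atTop
        (𝓝 (Real.log (a x))) := (Real.continuousAt_log (ne_of_gt hax)).tendsto.comp h1
    have h3 : Tendsto (fun n : ℕ => Real.log ((P n).eval x / lam x ^ n) / n) atTop (𝓝 0) :=
      Tendsto.div_atTop h2 tendsto_natCast_atTop_atTop
    have h4 : Tendsto (fun n : ℕ => Real.log ((P n).eval x / lam x ^ n) / n + Real.log (lam x))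
        atTop (𝓝 (0 + Real.log (lam x))) := h3.add tendsto_const_nhds
    rw [zero_add] at h4
    refine h4.congr' ?_
    filter_upwards [eventually_ge_atTop 1] with n hn
    have hPn : 0 < (P n).eval x := aux_eval_pos _ (hcoeff_nn n) (hPpos n hn) hxpos
    have hnn : (n:ℝ) ≠ 0 := Nat.cast_ne_zero.2 (by omega)
    rw [Real.log_div (ne_of_gt hPn) (ne_of_gt (pow_pos hlx n)), Real.log_pow]
    field_simp
    ring
  -- midpoint inequality
  have hmid : ∀ s ∈ J, ∀ t ∈ J, ψ ((s + t) / 2) ≤ (ψ s + ψ t) / 2 := by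
    intro s hs t ht
    have hmJ : (s + t) / 2 ∈ J :=
      ⟨by linarith [hs.1, ht.1], by linarith [hs.2, ht.2]⟩
    have hxs := hJmaps s hs
    have hxt := hJmaps t ht
    have hxm := hJmaps _ hmJ
    have hsqrt : Real.exp ((s + t) / 2) = Real.sqrt (Real.exp s * Real.exp t) := by
      rw [← Real.exp_add]; exact Real.exp_half (s + t)
    have key : ∀ᶠ n : ℕ in atTop,
        Real.log ((P n).eval (Real.exp ((s + t) / 2))) / n ≤
        (Real.log ((P n).eval (Real.exp s)) / n + Real.log ((P n).eval (Real.exp t)) / n) / 2 := by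
      filter_upwards [eventually_ge_atTop 1] with n hn
      have hps : 0 < (P n).eval (Real.exp s) :=
        aux_eval_pos _ (hcoeff_nn n) (hPpos n hn) (Real.exp_pos s)
      have hpt : 0 < (P n).eval (Real.exp t) :=
        aux_eval_pos _ (hcoeff_nn n) (hPpos n hn) (Real.exp_pos t)
      have hpm : 0 < (P n).eval (Real.exp ((s + t) / 2)) :=
        aux_eval_pos _ (hcoeff_nn n) (hPpos n hn) (Real.exp_pos _)
      have hcs : (P n).eval (Real.exp ((s + t) / 2)) ^ 2 ≤
          (P n).eval (Real.exp s) * (P n).eval (Real.exp t) := by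
        rw [hsqrt]
        exact aux_cs _ (hcoeff_nn n) (Real.exp_pos s).le (Real.exp_pos t).le
      have hlog : 2 * Real.log ((P n).eval (Real.exp ((s + t) / 2))) ≤
          Real.log ((P n).eval (Real.exp s)) + Real.log ((P n).eval (Real.exp t)) := by
        have := Real.log_le_log (by positivity) hcs
        rwa [Real.log_pow, Real.log_mul (ne_of_gt hps) (ne_of_gt hpt)] at this
        
      have hnpos : (0:ℝ) < n := by exact_mod_cast Nat.lt_of_lt_of_le Nat.zero_lt_one hn
      rw [← add_div, div_div]
      rw [div_le_div_iff₀ hnpos (by positivity)]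
      nlinarith [hlog]
    have l1 := hlimit _ hxm
    have l2 := ((hlimit _ hxs).add (hlimit _ hxt)).div_const 2
    exact le_of_tendsto_of_tendsto l1 l2 key
  -- smoothness of ψ on J
  have hJsub : ∀ t ∈ J, Real.exp t ∈ Set.Ioo (1 - δ) (1 + δ) :=
    fun t ht => (hgood _ (hJmaps t ht)).2.2.1
  have hlampos : ∀ t ∈ J, 0 < lam (Real.exp t) := fun t ht => (hgood _ (hJmaps t ht)).2.1
  have hg : ContDiffOn ℝ 2 (fun t => lam (Real.exp t)) J :=
    hlamC2.comp Real.contDiff_exp.contDiffOn (fun t ht => hJsub t ht)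
  have hC2ψ : ContDiffOn ℝ 2 ψ J := by
    refine Real.contDiffOn_log.comp hg (fun t ht => ?_)
    exact Set.mem_compl_singleton_iff.2 (hlampos t ht).ne'
  -- derivatives of lam
  have hlam_deriv : ∀ x ∈ Set.Ioo (1 - δ) (1 + δ), HasDerivAt lam (deriv lam x) x := by
    intro x hx
    exact ((hlamC2.differentiableOn (by norm_num)).differentiableAt
      (hIoo_open.mem_nhds hx)).hasDerivAt
  have hdlamC1 : ContDiffOn ℝ 1 (deriv lam) (Set.Ioo (1 - δ) (1 + δ)) :=
    hlamC2.deriv_of_isOpen hIoo_open (by norm_num)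
  have hdlam_diff : DifferentiableAt ℝ (deriv lam) 1 :=
    (hdlamC1.differentiableOn one_ne_zero).differentiableAt hnhds
  -- first derivative of ψ
  have hψ' : ∀ t ∈ J, HasDerivAt ψ
      ((lam (Real.exp t))⁻¹ * (deriv lam (Real.exp t) * Real.exp t)) t := by
    intro t ht
    have h1 : HasDerivAt (fun u => lam (Real.exp u)) (deriv lam (Real.exp t) * Real.exp t) t :=
      (hlam_deriv _ (hJsub t ht)).comp t (Real.hasDerivAt_exp t)
    exact (Real.hasDerivAt_log (hlampos t ht).ne').comp t h1
  have hEq : deriv ψ =ᶠ[𝓝 (0:ℝ)]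
      (fun t => (lam (Real.exp t))⁻¹ * (deriv lam (Real.exp t) * Real.exp t)) := by
    filter_upwards [hJopen.mem_nhds h0J] with t ht
    exact (hψ' t ht).deriv
  -- second derivative at 0
  have hA : HasDerivAt (fun t => deriv lam (Real.exp t))
      (deriv (deriv lam) 1 * Real.exp 0) 0 := by
    have h1 : HasDerivAt (deriv lam) (deriv (deriv lam) 1) (Real.exp 0) := by
      rw [Real.exp_zero]; exact hdlam_diff.hasDerivAt
    exact h1.comp 0 (Real.hasDerivAt_exp 0)
  have hC : HasDerivAt (fun t => lam (Real.exp t)) (deriv lam 1 * Real.exp 0) 0 := by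
    have h1 : HasDerivAt lam (deriv lam 1) (Real.exp 0) := by
      rw [Real.exp_zero]; exact hlam_deriv _ h1mem
    exact h1.comp 0 (Real.hasDerivAt_exp 0)
  have hC0 : lam (Real.exp 0) = D := by rw [Real.exp_zero, hD]
  have hCinv : HasDerivAt (fun t => (lam (Real.exp t))⁻¹)
      (-(deriv lam 1 * Real.exp 0) / lam (Real.exp 0) ^ 2) 0 :=
    hC.inv (by rw [hC0]; exact hDpos.ne')
  have hG := hCinv.mul (hA.mul (Real.hasDerivAt_exp 0))
  have hGv : HasDerivAt
      (fun t => (lam (Real.exp t))⁻¹ * (deriv lam (Real.exp t) * Real.exp t)) v 0 := by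
    convert hG using 1
    case e'_4 => rfl
    case e'_5 => rfl
    case e'_8 => rfl
    rw [hv]
    simp only [Pi.mul_apply, Real.exp_zero, mul_one, one_mul]
    rw [← hD]
    have hDne : D ≠ 0 := hDpos.ne'
    field_simp
    ring
  have hψ''0 : deriv (deriv ψ) 0 = v := by
    rw [hEq.deriv_eq]
    exact hGv.deriv
  -- continuity of second derivative
  have hdψC1 : ContDiffOn ℝ 1 (deriv ψ) J := hC2ψ.deriv_of_isOpen hJopen (by norm_num)
  have hcont2 : ContinuousOn (deriv (deriv ψ)) J :=
    hdψC1.continuousOn_deriv_of_isOpen hJopen le_rfl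
  have hcontAt : ContinuousAt (deriv (deriv ψ)) 0 :=
    hcont2.continuousAt (hJopen.mem_nhds h0J)
  have hneg : ∀ᶠ t in 𝓝 (0:ℝ), deriv (deriv ψ) t < 0 :=
    hcontAt.eventually (eventually_lt_nhds (by rw [hψ''0]; exact hvneg))
  obtain ⟨η, hηpos, hη⟩ := Metric.eventually_nhds_iff.1
    (hneg.and (hJopen.mem_nhds h0J : ∀ᶠ t in 𝓝 (0:ℝ), t ∈ J))
  set K := Set.Ioo (-(η/2)) (η/2) with hKdef
  have hKsub : ∀ t ∈ K, deriv (deriv ψ) t < 0 ∧ t ∈ J := by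
    intro t ht
    have h1 := ht.1
    have h2 := ht.2
    have : dist t 0 < η := by
      rw [Real.dist_eq, sub_zero, abs_lt]; exact ⟨by linarith, by linarith⟩
    exact hη this
  have hconc : StrictConcaveOn ℝ K ψ := by
    apply strictConcaveOn_of_deriv2_neg (convex_Ioo _ _)
    · exact hC2ψ.continuousOn.mono (fun t ht => (hKsub t ht).2)
    · intro x hx
      rw [interior_Ioo] at hx
      have h := (hKsub x hx).1
      simpa [Function.iterate_succ, Function.iterate_zero] using h
  have hh : (η/4) ∈ K := ⟨by linarith, by linarith⟩
  have hh' : (-(η/4)) ∈ K := ⟨by linarith, by linarith⟩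
  have hne : (η/4) ≠ -(η/4) := by
    intro h; have : η/4 > 0 := by linarith
    linarith [h ▸ this]
  have hlt := hconc.2 hh hh' hne (by norm_num : (0:ℝ) < 1/2) (by norm_num : (0:ℝ) < 1/2)
    (by norm_num)
  have hmid0 := hmid (η/4) (hKsub _ hh).2 (-(η/4)) (hKsub _ hh').2
  simp only [smul_eq_mul] at hlt
  have h0a : (η/4 + -(η/4))/2 = 0 := by ring
  have h0b : 1/2 * (η/4) + 1/2 * (-(η/4)) = 0 := by ring
  rw [h0a] at hmid0
  rw [h0b] at hlt
  linarith
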